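/- Let G = (V, E) be a graph with maximum degree at most d and let v ∈ V. Then for every integer t ≥ 2, the number of {2,3}-trees in G of size t containing v is at most (e·d³)^{t−1}/2, where e is the base of the natural logarithm. -/

import Mathlib

open Finset
open scoped Classical

/-- The auxiliary graph on the vertices of `G` joining two vertices exactly when their
geodesic distance in `G` is `2` or `3`. (Note that `SimpleGraph.dist` is `0` for
unreachable pairs, which are correctly excluded here since their geodesic distance is `∞`.) -/
def twoThreeGraph {V : Type*} (G : SimpleGraph V) : SimpleGraph V where
  Adj u v := u ≠ v ∧ (G.dist u v = 2 ∨ G.dist u v = 3)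
  symm := by
    constructor
    intro u v h
    exact ⟨h.1.symm, by rw [SimpleGraph.dist_comm]; exact h.2⟩
  loopless := by
    constructor
    intro u h
    exact h.1 rfl

/-- A `{2,3}`-tree in a graph `G` is a set `T` of vertices such that (i) any two distinct
vertices of `T` are at geodesic distance at least `2` (i.e. are non-adjacent), and (ii) the
graph on `T` joining pairs at distance `2` or `3` is connected. -/
def IsTwoThreeTree {V : Type*} (G : SimpleGraph V) (T : Finset V) : Prop :=
  (∀ u ∈ T, ∀ v ∈ T, u ≠ v → ¬ G.Adj u v) ∧
    ((twoThreeGraph G).induce (T : Set V)).Connected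

set_option linter.unusedSectionVars false
set_option linter.unusedVariables false
set_option maxHeartbeats 1000000

namespace TTAux


noncomputable section

variable {V : Type*} [Fintype V] [DecidableEq V] [LinearOrder V]
variable (H : SimpleGraph V) (v : V) (T : Finset V)

def frontier (S : Finset V) : Finset V :=
  (T \ S).filter fun w => ∃ x ∈ S, H.Adj x w

def nextV (S : Finset V) : V :=
  if h : (frontier H T S).Nonempty then (frontier H T S).min' h else v

def visited : ℕ → Finset V
  | 0 => {v}
  | i + 1 => visited i ∪ {nextV H v T (visited i)}

def useq : ℕ → V
  | 0 => v
  | i + 1 => nextV H v T (visited H v T i)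

lemma mem_frontier' {S : Finset V} {w : V} :
    w ∈ frontier H T S ↔ w ∈ T ∧ w ∉ S ∧ ∃ x ∈ S, H.Adj x w := by
  simp [frontier, Finset.mem_sdiff, and_assoc]

lemma crossing_of_walk {S : Finset V} {x y : (T : Set V)}
    (p : (H.induce (T : Set V)).Walk x y) (hx : (x : V) ∈ S) (hy : (y : V) ∉ S) :
    (frontier H T S).Nonempty := by
  induction p with
  | nil => exact absurd hx hy
  | @cons a b c h p ih =>
    by_cases hb : (b : V) ∈ S
    · exact ih hb hy
    · exact ⟨(b : V), (mem_frontier' H T).2 ⟨b.2, hb, ⟨(a : V), hx, h⟩⟩⟩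

lemma frontier_nonempty (hconn : (H.induce (T : Set V)).Connected)
    {S : Finset V} (hST : S ⊆ T) (hS : S.Nonempty) (hne : S ≠ T) :
    (frontier H T S).Nonempty := by
  obtain ⟨a, ha⟩ := hS
  obtain ⟨b, hbT, hbS⟩ := Finset.exists_of_ssubset ⟨hST, fun h => hne (Finset.Subset.antisymm hST h)⟩
  obtain ⟨p⟩ := hconn ⟨a, hST ha⟩ ⟨b, hbT⟩
  exact crossing_of_walk H T p ha hbS

variable {v T}

lemma nextV_mem (hv : v ∈ T) (S : Finset V) : nextV H v T S ∈ T := by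
  unfold nextV
  split
  · next h => exact ((mem_frontier' H T).1 ((frontier H T S).min'_mem h)).1
  · exact hv

lemma v_mem_visited (i : ℕ) : v ∈ visited H v T i := by
  induction i with
  | zero => simp [visited]
  | succ i ih => exact Finset.mem_union_left _ ih

lemma visited_subset (hv : v ∈ T) (i : ℕ) : visited H v T i ⊆ T := by
  induction i with
  | zero => simpa [visited] using hv
  | succ i ih =>
    intro w hw
    rcases Finset.mem_union.1 hw with h | h
    · exact ih h
    · rw [Finset.mem_singleton] at h; subst h; exact nextV_mem H hv _

lemma visited_eq_image (i : ℕ) :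
    visited H v T i = (Finset.range (i + 1)).image (useq H v T) := by
  induction i with
  | zero => simp [visited, useq]
  | succ i ih =>
    have h1 : visited H v T (i+1) = visited H v T i ∪ {useq H v T (i+1)} := rfl
    rw [h1, ih, show Finset.range (i+1+1) = insert (i+1) (Finset.range (i+1)) from Finset.range_add_one,
      Finset.image_insert]
    ext w; simp [or_comm]

lemma card_visited_ge (hconn : (H.induce (T : Set V)).Connected) (hv : v ∈ T) (i : ℕ) :
    min (i + 1) T.card ≤ (visited H v T i).card := by
  induction i with
  | zero => simpa [visited] using min_le_left 1 T.card
  | succ i ih =>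
    by_cases hvt : visited H v T i = T
    · have hsub : visited H v T i ⊆ visited H v T (i+1) := by
        rw [show visited H v T (i+1) = visited H v T i ∪ {nextV H v T (visited H v T i)} from rfl]
        exact Finset.subset_union_left
      rw [hvt] at hsub
      have h1 : T.card ≤ (visited H v T (i+1)).card := Finset.card_le_card hsub
      exact le_trans (min_le_right _ _) h1
    · have hfr : (frontier H T (visited H v T i)).Nonempty :=
        frontier_nonempty H T hconn (visited_subset H hv i) ⟨v, v_mem_visited H i⟩ hvt
      have hn : nextV H v T (visited H v T i) ∈ frontier H T (visited H v T i) := by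
        unfold nextV
        rw [dif_pos hfr]
        exact Finset.min'_mem _ _
      have hnot : nextV H v T (visited H v T i) ∉ visited H v T i :=
        ((mem_frontier' H T).1 hn).2.1
      have : (visited H v T (i+1)).card = (visited H v T i).card + 1 := by
        have h2 : visited H v T (i+1) = insert (nextV H v T (visited H v T i)) (visited H v T i) := by
          show visited H v T i ∪ {nextV H v T (visited H v T i)} = _
          ext w; simp [or_comm]
        rw [h2, Finset.card_insert_of_notMem hnot]
      omega

lemma visited_eq (hconn : (H.induce (T : Set V)).Connected) (hv : v ∈ T) :
    visited H v T (T.card - 1) = T := by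
  have h1 : 1 ≤ T.card := Finset.card_pos.2 ⟨v, hv⟩
  apply Finset.eq_of_subset_of_card_le (visited_subset H hv _)
  have := card_visited_ge H hconn hv (T.card - 1)
  omega

variable (v T)

-- For a vertex `w ∈ T`, `w ≠ v`, there is an entry step.
lemma exists_entry (hconn : (H.induce (T : Set V)).Connected) (hv : v ∈ T)
    {w : V} (hw : w ∈ T) (hwv : w ≠ v) :
    ∃ k, k + 1 + 1 ≤ T.card ∧ w = useq H v T (k + 1) ∧
      w ∈ frontier H T (visited H v T k) := by
  have h1 : 1 ≤ T.card := Finset.card_pos.2 ⟨v, hv⟩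
  have hw' : w ∈ visited H v T (T.card - 1) := by rw [visited_eq H hconn hv]; exact hw
  rw [visited_eq_image] at hw'
  obtain ⟨m, hm, hmw⟩ := Finset.mem_image.1 hw'
  rw [Finset.mem_range] at hm
  match m, hmw with
  | 0, hmw => exact absurd hmw.symm hwv
  | k + 1, hmw =>
    refine ⟨k, by omega, hmw.symm, ?_⟩
    by_cases hfr : (frontier H T (visited H v T k)).Nonempty
    · have heq : useq H v T (k+1) = (frontier H T (visited H v T k)).min' hfr := by
        show nextV H v T (visited H v T k) = _
        unfold nextV; rw [dif_pos hfr]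
      rw [← hmw, heq]; exact Finset.min'_mem _ _
    · exfalso
      apply hwv
      rw [← hmw]
      show nextV H v T (visited H v T k) = v
      unfold nextV; rw [dif_neg hfr]

def pidx (w : V) : ℕ :=
  if h : ((Finset.range T.card).filter fun j => H.Adj (useq H v T j) w).Nonempty
  then (((Finset.range T.card).filter fun j => H.Adj (useq H v T j) w).min' h) else 0

lemma pidx_spec (hconn : (H.induce (T : Set V)).Connected) (hv : v ∈ T)
    {w : V} (hw : w ∈ T) (hwv : w ≠ v) :
    H.Adj (useq H v T (pidx H v T w)) w ∧ pidx H v T w + 1 + 1 ≤ T.card := by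
  obtain ⟨k, hk, hwk, hfm⟩ := exists_entry H v T hconn hv hw hwv
  obtain ⟨-, -, x, hx, hadj⟩ := (mem_frontier' H T).1 hfm
  rw [visited_eq_image] at hx
  obtain ⟨j, hj, hjx⟩ := Finset.mem_image.1 hx
  rw [Finset.mem_range] at hj
  have hjmem : j ∈ (Finset.range T.card).filter fun j => H.Adj (useq H v T j) w := by
    rw [Finset.mem_filter, Finset.mem_range]
    exact ⟨by omega, by rw [hjx]; exact hadj⟩
  have hne : ((Finset.range T.card).filter fun j => H.Adj (useq H v T j) w).Nonempty := ⟨j, hjmem⟩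
  have hpe : pidx H v T w = ((Finset.range T.card).filter fun j => H.Adj (useq H v T j) w).min' hne := by
    unfold pidx; rw [dif_pos hne]
  constructor
  · have := Finset.min'_mem _ hne
    rw [← hpe] at this
    exact (Finset.mem_filter.1 this).2
  · have := Finset.min'_le _ j hjmem
    rw [← hpe] at this
    omega

lemma pidx_le_iff (hconn : (H.induce (T : Set V)).Connected) (hv : v ∈ T)
    {w : V} (hw : w ∈ T) (hwv : w ≠ v) {i : ℕ} (hi : i < T.card) :
    pidx H v T w ≤ i ↔ ∃ j ≤ i, H.Adj (useq H v T j) w := by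
  constructor
  · intro h
    exact ⟨pidx H v T w, h, (pidx_spec H v T hconn hv hw hwv).1⟩
  · rintro ⟨j, hj, hadj⟩
    have hjmem : j ∈ (Finset.range T.card).filter fun j => H.Adj (useq H v T j) w := by
      rw [Finset.mem_filter, Finset.mem_range]
      exact ⟨by omega, hadj⟩
    have hne : ((Finset.range T.card).filter fun j => H.Adj (useq H v T j) w).Nonempty := ⟨j, hjmem⟩
    have hpe : pidx H v T w = ((Finset.range T.card).filter fun j => H.Adj (useq H v T j) w).min' hne := by
      unfold pidx; rw [dif_pos hne]
    rw [hpe]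
    exact le_trans (Finset.min'_le _ j hjmem) hj

def child (i : ℕ) : Finset V := (T.erase v).filter fun w => pidx H v T w = i

lemma mem_child {i : ℕ} {w : V} :
    w ∈ child H v T i ↔ w ∈ T.erase v ∧ pidx H v T w = i := Finset.mem_filter

lemma child_subset_nbr (hconn : (H.induce (T : Set V)).Connected) (hv : v ∈ T) (i : ℕ) :
    child H v T i ⊆ H.neighborFinset (useq H v T i) := by
  intro w hw
  obtain ⟨hw1, hw2⟩ := (mem_child H v T).1 hw
  rw [SimpleGraph.mem_neighborFinset, ← hw2]
  exact (pidx_spec H v T hconn hv (Finset.mem_of_mem_erase hw1) (Finset.ne_of_mem_erase hw1)).1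

lemma biUnion_child (hconn : (H.induce (T : Set V)).Connected) (hv : v ∈ T) :
    (Finset.range (T.card - 1)).biUnion (child H v T) = T.erase v := by
  apply Finset.Subset.antisymm
  · intro w hw
    obtain ⟨i, -, hwi⟩ := Finset.mem_biUnion.1 hw
    exact Finset.mem_of_mem_filter _ hwi
  · intro w hw
    have h2 := (pidx_spec H v T hconn hv (Finset.mem_of_mem_erase hw) (Finset.ne_of_mem_erase hw)).2
    exact Finset.mem_biUnion.2 ⟨pidx H v T w, Finset.mem_range.2 (by omega),
      (mem_child H v T).2 ⟨hw, rfl⟩⟩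

lemma child_disjoint {i j : ℕ} (hij : i ≠ j) : Disjoint (child H v T i) (child H v T j) := by
  rw [Finset.disjoint_left]
  intro w hwi hwj
  rw [mem_child] at hwi hwj
  exact hij (hwi.2 ▸ hwj.2 ▸ rfl)

lemma sum_card_child (hconn : (H.induce (T : Set V)).Connected) (hv : v ∈ T) :
    ∑ i ∈ Finset.range (T.card - 1), (child H v T i).card = T.card - 1 := by
  rw [← Finset.card_biUnion (fun i _ j _ hij => child_disjoint H v T hij),
    biUnion_child H v T hconn hv, Finset.card_erase_of_mem hv]

lemma frontier_eq_child (hconn : (H.induce (T : Set V)).Connected) (hv : v ∈ T)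
    {i : ℕ} (hi : i + 1 < T.card) :
    frontier H T (visited H v T i) =
      ((Finset.range (i + 1)).biUnion (child H v T)) \ visited H v T i := by
  ext w
  rw [mem_frontier', Finset.mem_sdiff, Finset.mem_biUnion]
  constructor
  · rintro ⟨hwT, hwV, x, hx, hadj⟩
    have hwv : w ≠ v := fun h => hwV (h ▸ v_mem_visited H i)
    have hx' := hx
    rw [visited_eq_image] at hx'
    obtain ⟨j, hj, hjx⟩ := Finset.mem_image.1 hx'
    rw [Finset.mem_range] at hj
    have hple : pidx H v T w ≤ i :=
      (pidx_le_iff H v T hconn hv hwT hwv (by omega)).2 ⟨j, by omega, by rw [hjx]; exact hadj⟩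
    exact ⟨⟨pidx H v T w, Finset.mem_range.2 (by omega),
      (mem_child H v T).2 ⟨Finset.mem_erase.2 ⟨hwv, hwT⟩, rfl⟩⟩, hwV⟩
  · rintro ⟨⟨j, hj, hwj⟩, hwV⟩
    rw [Finset.mem_range] at hj
    rw [mem_child, Finset.mem_erase] at hwj
    obtain ⟨⟨hwv, hwT⟩, hpw⟩ := hwj
    refine ⟨hwT, hwV, useq H v T j, ?_, ?_⟩
    · rw [visited_eq_image]
      exact Finset.mem_image.2 ⟨j, Finset.mem_range.2 (by omega), rfl⟩
    · rw [← hpw]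
      exact (pidx_spec H v T hconn hv hwT hwv).1

def idx (u w : V) : ℕ := ((H.neighborFinset u).sort (· ≤ ·)).idxOf w

lemma idx_lt_card {u w : V} (hw : w ∈ H.neighborFinset u) :
    idx H u w < (H.neighborFinset u).card := by
  have := List.idxOf_lt_length_iff.2 ((Finset.mem_sort (α := V) (· ≤ ·)).2 hw)
  rwa [Finset.length_sort] at this

lemma idx_injOn {u w w' : V} (hw : w ∈ H.neighborFinset u) (hw' : w' ∈ H.neighborFinset u)
    (h : idx H u w = idx H u w') : w = w' :=
  (List.idxOf_inj ((Finset.mem_sort (α := V) (· ≤ ·)).2 hw)).1 h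

def enc : Finset (ℕ × ℕ) :=
  (Finset.range (T.card - 1)).biUnion fun i =>
    (child H v T i).image fun w => (i, idx H (useq H v T i) w)

lemma mem_enc {p : ℕ × ℕ} :
    p ∈ enc H v T ↔ ∃ i < T.card - 1, ∃ w ∈ child H v T i,
      p = (i, idx H (useq H v T i) w) := by
  unfold enc
  simp only [Finset.mem_biUnion, Finset.mem_image, Finset.mem_range]
  constructor
  · rintro ⟨i, hi, w, hw, rfl⟩; exact ⟨i, hi, w, hw, rfl⟩
  · rintro ⟨i, hi, w, hw, rfl⟩; exact ⟨i, hi, w, hw, rfl⟩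

lemma card_enc (hconn : (H.induce (T : Set V)).Connected) (hv : v ∈ T) :
    (enc H v T).card = T.card - 1 := by
  unfold enc
  rw [Finset.card_biUnion]
  · have hcards : ∀ i ∈ Finset.range (T.card - 1),
        ((child H v T i).image fun w => (i, idx H (useq H v T i) w)).card
          = (child H v T i).card := by
      intro i hi
      apply Finset.card_image_of_injOn
      intro w hw w' hw' hww
      exact idx_injOn H (child_subset_nbr H v T hconn hv i hw)
        (child_subset_nbr H v T hconn hv i hw') (by simpa using hww)
    rw [Finset.sum_congr rfl hcards]
    exact sum_card_child H v T hconn hv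
  · intro i hi j hj hij
    rw [Function.onFun, Finset.disjoint_left]
    rintro p hp hq
    obtain ⟨w, hw, rfl⟩ := Finset.mem_image.1 hp
    obtain ⟨w', hw', he⟩ := Finset.mem_image.1 hq
    exact hij (congrArg Prod.fst he).symm

lemma enc_subset {Δ : ℕ} (hΔ : ∀ u, (H.neighborFinset u).card ≤ Δ)
    (hconn : (H.induce (T : Set V)).Connected) (hv : v ∈ T) :
    enc H v T ⊆ (Finset.range (T.card - 1)) ×ˢ (Finset.range Δ) := by
  intro p hp
  obtain ⟨i, hi, w, hw, rfl⟩ := (mem_enc H v T).1 hp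
  rw [Finset.mem_product, Finset.mem_range, Finset.mem_range]
  exact ⟨hi, lt_of_lt_of_le (idx_lt_card H (child_subset_nbr H v T hconn hv i hw))
    (hΔ _)⟩

lemma child_recover (hconn : (H.induce (T : Set V)).Connected) (hv : v ∈ T)
    {i : ℕ} (hi : i < T.card - 1) :
    child H v T i = (H.neighborFinset (useq H v T i)).filter
      (fun w => (i, idx H (useq H v T i) w) ∈ enc H v T) := by
  apply Finset.Subset.antisymm
  · intro w hw
    rw [Finset.mem_filter]
    refine ⟨child_subset_nbr H v T hconn hv i hw, ?_⟩
    exact (mem_enc H v T).2 ⟨i, hi, w, hw, rfl⟩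
  · intro w hw
    rw [Finset.mem_filter] at hw
    obtain ⟨hwn, hwe⟩ := hw
    obtain ⟨i', hi', w', hw', he⟩ := (mem_enc H v T).1 hwe
    have h1 : i' = i := (congrArg Prod.fst he).symm
    subst h1
    have h2 : idx H (useq H v T i') w' = idx H (useq H v T i') w :=
      (congrArg Prod.snd he).symm
    have h3 : w = w' :=
      idx_injOn H hwn (child_subset_nbr H v T hconn hv i' hw') h2.symm
    rw [h3]
    exact hw'

lemma useq_eq_of_enc_eq {T T' : Finset V}
    (hconn : (H.induce (T : Set V)).Connected) (hv : v ∈ T)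
    (hconn' : (H.induce (T' : Set V)).Connected) (hv' : v ∈ T')
    (hcard : T.card = T'.card) (henc : enc H v T = enc H v T') :
    ∀ i, i ≤ T.card - 1 → ∀ j ≤ i, useq H v T j = useq H v T' j := by
  intro i
  induction i with
  | zero =>
    intro _ j hj
    rw [Nat.le_zero] at hj
    subst hj; rfl
  | succ k IH =>
    intro hk j hj
    rcases Nat.lt_or_ge j (k + 1) with h | h
    · exact IH (by omega) j (by omega)
    · have hj' : j = k + 1 := by omega
      subst hj'
      have hvis : visited H v T k = visited H v T' k := by
        rw [visited_eq_image, visited_eq_image]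
        apply Finset.image_congr
        intro j hj
        rw [Finset.mem_coe, Finset.mem_range] at hj
        exact IH (by omega) j (by omega)
      have hchild : ∀ j' ≤ k, child H v T j' = child H v T' j' := by
        intro j' hj'
        rw [child_recover H v T (i := j') hconn hv (by omega),
          child_recover H v T' (i := j') hconn' hv' (by omega), henc,
          IH (by omega) j' (by omega)]
      have hbu : (Finset.range (k+1)).biUnion (child H v T)
          = (Finset.range (k+1)).biUnion (child H v T') :=
        Finset.biUnion_congr rfl (fun j' hj' =>
          hchild j' (by rw [Finset.mem_range] at hj'; omega))
      have hfront : frontier H T (visited H v T k) = frontier H T' (visited H v T' k) := by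
        rw [frontier_eq_child H v T (i := k) hconn hv (by omega),
          frontier_eq_child H v T' (i := k) hconn' hv' (by omega), hvis, hbu]
      show nextV H v T (visited H v T k) = nextV H v T' (visited H v T' k)
      unfold nextV
      rw [hfront]

lemma eq_of_enc_eq {T T' : Finset V}
    (hconn : (H.induce (T : Set V)).Connected) (hv : v ∈ T)
    (hconn' : (H.induce (T' : Set V)).Connected) (hv' : v ∈ T')
    (hcard : T.card = T'.card) (henc : enc H v T = enc H v T') : T = T' := by
  have h1 : 1 ≤ T.card := Finset.card_pos.2 ⟨v, hv⟩
  rw [← visited_eq H hconn hv, ← visited_eq H hconn' hv', ← hcard]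
  rw [visited_eq_image, visited_eq_image]
  apply Finset.image_congr
  intro j hj
  rw [Finset.mem_coe, Finset.mem_range] at hj
  exact useq_eq_of_enc_eq H v hconn hv hconn' hv' hcard henc (T.card - 1) (le_refl _) j (by omega)

/-- Main counting lemma: at most `choose ((t-1)*Δ) (t-1)` connected `t`-sets containing `v`. -/
lemma count_connected_le (Δ : ℕ) (hΔ : ∀ u, (H.neighborFinset u).card ≤ Δ) (t : ℕ) :
    ((Finset.univ : Finset (Finset V)).filter fun T : Finset V =>
        v ∈ T ∧ T.card = t ∧ (H.induce ((T : Finset V) : Set V)).Connected).card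
      ≤ ((t - 1) * Δ).choose (t - 1) := by
  classical
  have key : ((Finset.univ : Finset (Finset V)).filter fun T : Finset V =>
        v ∈ T ∧ T.card = t ∧ (H.induce ((T : Finset V) : Set V)).Connected).card
      ≤ (Finset.powersetCard (t - 1) ((Finset.range (t - 1)) ×ˢ (Finset.range Δ))).card := by
    apply Finset.card_le_card_of_injOn (fun T => enc H v T)
    · intro T hT
      rw [Finset.mem_coe, Finset.mem_filter] at hT
      obtain ⟨-, hvT, hcard, hconn⟩ := hT
      rw [Finset.mem_coe, Finset.mem_powersetCard]
      refine ⟨?_, by rw [card_enc H v T hconn hvT, hcard]⟩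
      have := enc_subset H v T hΔ hconn hvT
      rwa [hcard] at this
    · intro T hT T' hT' he
      rw [Finset.mem_coe, Finset.mem_filter] at hT hT'
      obtain ⟨-, hv1, hc1, hcn1⟩ := hT
      obtain ⟨-, hv2, hc2, hcn2⟩ := hT'
      exact eq_of_enc_eq H v hcn1 hv1 hcn2 hv2 (by rw [hc1, hc2]) he
  calc _ ≤ _ := key
    _ = _ := by
        rw [Finset.card_powersetCard, Finset.card_product, Finset.card_range, Finset.card_range]

end


lemma dist_pred {V : Type*} (G : SimpleGraph V) {u w : V} {k : ℕ} (h : G.dist u w = k + 1) :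
    ∃ y, G.Adj y w ∧ G.dist u y = k := by
  have hr : G.Reachable u w := SimpleGraph.Reachable.of_dist_ne_zero (by omega)
  obtain ⟨p, hp⟩ := hr.exists_walk_length_eq_dist
  have hne : w ≠ u := by
    rintro rfl
    rw [SimpleGraph.dist_self] at h
    omega
  obtain ⟨y, hadj, q, hq⟩ := SimpleGraph.Walk.exists_eq_cons_of_ne hne p.reverse
  have hlq : q.length = k := by
    have h2 := congrArg SimpleGraph.Walk.length hq
    rw [SimpleGraph.Walk.length_reverse, hp, h, SimpleGraph.Walk.length_cons] at h2
    omega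
  refine ⟨y, hadj.symm, le_antisymm ?_ ?_⟩
  · have := SimpleGraph.dist_le q.reverse
    rwa [SimpleGraph.Walk.length_reverse, hlq] at this
  · by_contra hlt
    push_neg at hlt
    obtain ⟨r, hrr⟩ := (SimpleGraph.Reachable.mono le_rfl ⟨q.reverse⟩).exists_walk_length_eq_dist
    have h3 : G.dist u w ≤ r.length + 1 := by
      have := SimpleGraph.dist_le (r.concat hadj.symm)
      rwa [SimpleGraph.Walk.length_concat] at this
    rw [hrr] at h3
    omega

lemma nbr_twoThree_le {V : Type*} [Fintype V] [DecidableEq V] (G : SimpleGraph V)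
    [DecidableRel G.Adj] (d : ℕ) (hd : ∀ u, G.degree u ≤ d) (u : V)
    [Fintype ((twoThreeGraph G).neighborSet u)] :
    ((twoThreeGraph G).neighborFinset u).card ≤ d ^ 3 := by
  classical
  set S2 := (Finset.univ : Finset V).filter (fun w => G.dist u w = 2) with hS2
  set S3 := (Finset.univ : Finset V).filter (fun w => G.dist u w = 3) with hS3
  have hsub : (twoThreeGraph G).neighborFinset u ⊆ S2 ∪ S3 := by
    intro w hw
    rw [SimpleGraph.mem_neighborFinset] at hw
    rcases hw.2 with h | h
    · exact Finset.mem_union_left _ (Finset.mem_filter.2 ⟨Finset.mem_univ _, h⟩)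
    · exact Finset.mem_union_right _ (Finset.mem_filter.2 ⟨Finset.mem_univ _, h⟩)
  have card_erase_le : ∀ (x y : V), x ∈ G.neighborFinset y →
      ((G.neighborFinset x).erase y).card ≤ d - 1 := by
    intro x y hx
    rw [Finset.card_erase_of_mem (by rw [SimpleGraph.mem_neighborFinset] at hx ⊢; exact hx.symm)]
    have := hd x
    rw [SimpleGraph.degree] at this
    omega
  have h2 : S2.card ≤ d * (d - 1) := by
    have hsub2 : S2 ⊆ (G.neighborFinset u).biUnion (fun x => (G.neighborFinset x).erase u) := by
      intro w hw
      rw [hS2, Finset.mem_filter] at hw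
      obtain ⟨y, hadj, hy⟩ := dist_pred G hw.2
      rw [SimpleGraph.dist_eq_one_iff_adj] at hy
      refine Finset.mem_biUnion.2 ⟨y, (SimpleGraph.mem_neighborFinset _ _ _).2 hy, ?_⟩
      rw [Finset.mem_erase, SimpleGraph.mem_neighborFinset]
      refine ⟨?_, hadj⟩
      rintro rfl
      rw [SimpleGraph.dist_self] at hw
      omega
    calc S2.card ≤ ∑ x ∈ G.neighborFinset u, ((G.neighborFinset x).erase u).card :=
          le_trans (Finset.card_le_card hsub2) (Finset.card_biUnion_le)
      _ ≤ ∑ x ∈ G.neighborFinset u, (d - 1) :=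
          Finset.sum_le_sum (fun x hx => card_erase_le x u hx)
      _ = (G.neighborFinset u).card * (d - 1) := by rw [Finset.sum_const, smul_eq_mul]
      _ ≤ d * (d - 1) := Nat.mul_le_mul_right _ (hd u)
  have h3 : S3.card ≤ S2.card * (d - 1) := by
    set f : V → V := fun y => if h : ∃ x, G.Adj x y ∧ G.dist u x = 1 then h.choose else u with hf
    have hsub3 : S3 ⊆ S2.biUnion (fun y => (G.neighborFinset y).erase (f y)) := by
      intro w hw
      rw [hS3, Finset.mem_filter] at hw
      obtain ⟨y, hadj, hy⟩ := dist_pred G hw.2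
      have hyS2 : y ∈ S2 := Finset.mem_filter.2 ⟨Finset.mem_univ _, hy⟩
      have hex : ∃ x, G.Adj x y ∧ G.dist u x = 1 := by
        obtain ⟨x, hx1, hx2⟩ := dist_pred G hy
        exact ⟨x, hx1, hx2⟩
      have hfy : G.Adj (f y) y ∧ G.dist u (f y) = 1 := by
        rw [hf]; simp only [dif_pos hex]; exact hex.choose_spec
      refine Finset.mem_biUnion.2 ⟨y, hyS2, ?_⟩
      rw [Finset.mem_erase, SimpleGraph.mem_neighborFinset]
      refine ⟨?_, hadj⟩
      rintro rfl
      rw [hfy.2] at hw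
      omega
    calc S3.card ≤ ∑ y ∈ S2, ((G.neighborFinset y).erase (f y)).card :=
          le_trans (Finset.card_le_card hsub3) (Finset.card_biUnion_le)
      _ ≤ ∑ y ∈ S2, (d - 1) := by
          apply Finset.sum_le_sum
          intro y hy
          have hyS2 := (Finset.mem_filter.1 hy).2
          have hex : ∃ x, G.Adj x y ∧ G.dist u x = 1 := by
            obtain ⟨x, hx1, hx2⟩ := dist_pred G hyS2
            exact ⟨x, hx1, hx2⟩
          have hfy : G.Adj (f y) y ∧ G.dist u (f y) = 1 := by
            rw [hf]; simp only [dif_pos hex]; exact hex.choose_spec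
          exact card_erase_le y (f y) ((SimpleGraph.mem_neighborFinset _ _ _).2 hfy.1)
      _ = S2.card * (d - 1) := by rw [Finset.sum_const, smul_eq_mul]
  have htot : ((twoThreeGraph G).neighborFinset u).card ≤ d * (d-1) + d * (d-1) * (d-1) := by
    calc ((twoThreeGraph G).neighborFinset u).card ≤ (S2 ∪ S3).card := Finset.card_le_card hsub
      _ ≤ S2.card + S3.card := Finset.card_union_le _ _
      _ ≤ d * (d-1) + S2.card * (d-1) := by omega
      _ ≤ d * (d-1) + d * (d-1) * (d-1) := by
          have := Nat.mul_le_mul_right (d-1) h2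
          omega
  rcases Nat.eq_zero_or_pos d with hd0 | hd0
  · subst hd0; simpa using htot
  · obtain ⟨e, rfl⟩ : ∃ e, d = e + 1 := ⟨d - 1, by omega⟩
    have hsimp : e + 1 - 1 = e := by omega
    rw [hsimp] at htot
    calc _ ≤ (e+1) * e + (e+1) * e * e := htot
      _ ≤ (e+1)^3 := by nlinarith

lemma pow_self_le_exp_factorial : ∀ n : ℕ, 1 ≤ n →
    (n : ℝ) ^ n ≤ Real.exp 1 ^ n * (Nat.factorial n) / 2 := by
  intro n hn
  induction n, hn using Nat.le_induction with
  | base =>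
    have := Real.exp_one_gt_d9
    norm_num
    nlinarith
  | succ n hn ih =>
    have hn0 : (0:ℝ) < (n:ℝ) := by exact_mod_cast hn
    have key : ((n:ℝ)+1)^n ≤ Real.exp 1 * (n:ℝ)^n := by
      have h1 : ((n:ℝ)+1) = (n:ℝ) * (1 + 1/(n:ℝ)) := by field_simp
      have h2 : (1 + 1/(n:ℝ))^n ≤ Real.exp (1/(n:ℝ)) ^ n := by
        apply pow_le_pow_left₀ (by positivity)
        rw [add_comm]
        exact Real.add_one_le_exp _
      have h3 : Real.exp (1/(n:ℝ)) ^ n = Real.exp 1 := by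
        rw [← Real.exp_nat_mul]
        congr 1
        field_simp
      calc ((n:ℝ)+1)^n = (n:ℝ)^n * (1 + 1/(n:ℝ))^n := by rw [h1, mul_pow]
        _ ≤ (n:ℝ)^n * Real.exp (1/(n:ℝ))^n := by
            apply mul_le_mul_of_nonneg_left h2 (by positivity)
        _ = Real.exp 1 * (n:ℝ)^n := by rw [h3]; ring
    have hfact : ((Nat.factorial (n+1) : ℕ) : ℝ) = ((n:ℝ)+1) * (Nat.factorial n : ℝ) := by
      rw [Nat.factorial_succ]
      push_cast
      ring
    have hexp : Real.exp 1 ^ (n+1) = Real.exp 1 * Real.exp 1 ^ n := by ring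
    have he : (0:ℝ) < Real.exp 1 := Real.exp_pos 1
    have hpow : (0:ℝ) ≤ (n:ℝ)^n := by positivity
    have hcast : ((n + 1 : ℕ):ℝ) = (n:ℝ) + 1 := by push_cast; ring
    rw [hcast]
    calc ((n:ℝ)+1)^(n+1) = ((n:ℝ)+1) * ((n:ℝ)+1)^n := by ring
      _ ≤ ((n:ℝ)+1) * (Real.exp 1 * (n:ℝ)^n) := by
          apply mul_le_mul_of_nonneg_left key (by positivity)
      _ ≤ ((n:ℝ)+1) * (Real.exp 1 * (Real.exp 1 ^ n * (Nat.factorial n) / 2)) := by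
          apply mul_le_mul_of_nonneg_left _ (by positivity)
          exact mul_le_mul_of_nonneg_left ih (le_of_lt he)
      _ = Real.exp 1 ^ (n+1) * (Nat.factorial (n+1) : ℝ) / 2 := by
          rw [hfact, hexp]; ring
  
lemma choose_bound (n Δ : ℕ) (hn : 1 ≤ n) :
    (((n * Δ).choose n : ℕ) : ℝ) ≤ (Real.exp 1 * (Δ:ℝ)) ^ n / 2 := by
  have h1 : (((n * Δ).choose n : ℕ) : ℝ) ≤ ((n*Δ : ℕ):ℝ)^n / (Nat.factorial n : ℝ) := by
    exact_mod_cast Nat.choose_le_pow_div n (n*Δ) (α := ℝ)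
  have hf : (0:ℝ) < (Nat.factorial n : ℝ) := by exact_mod_cast Nat.factorial_pos n
  have h2 := pow_self_le_exp_factorial n hn
  have hΔ : (0:ℝ) ≤ (Δ:ℝ) := Nat.cast_nonneg Δ
  calc (((n * Δ).choose n : ℕ) : ℝ) ≤ ((n*Δ : ℕ):ℝ)^n / (Nat.factorial n : ℝ) := h1
    _ = (Δ:ℝ)^n * ((n:ℝ)^n / (Nat.factorial n : ℝ)) := by push_cast; ring
    _ ≤ (Δ:ℝ)^n * (Real.exp 1 ^ n / 2) := by
        apply mul_le_mul_of_nonneg_left _ (by positivity)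
        rw [div_le_div_iff₀ hf two_pos]
        nlinarith
    _ = (Real.exp 1 * (Δ:ℝ)) ^ n / 2 := by rw [mul_pow]; ring

end TTAux

/-- If `G` has maximum degree at most `d` and `v` is a vertex, then for every `t ≥ 2` the
number of `{2,3}`-trees of size `t` in `G` containing `v` is at most `(e·d³)^(t-1)/2`. -/
theorem count_twoThreeTrees_le
    {V : Type*} [Fintype V] [DecidableEq V] (G : SimpleGraph V) [DecidableRel G.Adj]
    (d : ℕ) (hd : ∀ u, G.degree u ≤ d) (v : V) (t : ℕ) (ht : 2 ≤ t) :
    (((Finset.univ : Finset (Finset V)).filter fun T =>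
        v ∈ T ∧ T.card = t ∧ IsTwoThreeTree G T).card : ℝ)
      ≤ (Real.exp 1 * (d : ℝ) ^ 3) ^ (t - 1) / 2 := by
  letI : LinearOrder V :=
    LinearOrder.lift' (fun x => (Fintype.equivFin V) x) ((Fintype.equivFin V).injective)
  have hΔ : ∀ u, ((twoThreeGraph G).neighborFinset u).card ≤ d ^ 3 :=
    fun u => TTAux.nbr_twoThree_le G d hd u
  have h2 := TTAux.count_connected_le (twoThreeGraph G) v (d ^ 3) hΔ t
  have h1 : ((Finset.univ : Finset (Finset V)).filter fun T =>
        v ∈ T ∧ T.card = t ∧ IsTwoThreeTree G T).card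
      ≤ ((Finset.univ : Finset (Finset V)).filter fun T : Finset V =>
        v ∈ T ∧ T.card = t ∧
          ((twoThreeGraph G).induce ((T : Finset V) : Set V)).Connected).card := by
    apply Finset.card_le_card
    intro T hT
    rw [Finset.mem_filter] at hT ⊢
    exact ⟨hT.1, hT.2.1, hT.2.2.1, hT.2.2.2.2⟩
  have h3 := TTAux.choose_bound (t - 1) (d ^ 3) (by omega)
  have hc : (((Finset.univ : Finset (Finset V)).filter fun T =>
        v ∈ T ∧ T.card = t ∧ IsTwoThreeTree G T).card : ℝ)
      ≤ ((((t - 1) * d ^ 3).choose (t - 1) : ℕ) : ℝ) := by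
    exact_mod_cast le_trans h1 h2
  calc _ ≤ _ := hc
    _ ≤ (Real.exp 1 * ((d ^ 3 : ℕ) : ℝ)) ^ (t - 1) / 2 := h3
    _ = (Real.exp 1 * (d : ℝ) ^ 3) ^ (t - 1) / 2 := by push_cast; ring
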